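/- Let φ be a singular-expansive flow on a compact metric space X. Then φ is expansive on every nonsingular compact invariant subset of X; that is, if Λ ⊆ X is compact, invariant, and Λ ∩ Sing(φ) = ∅, then φ is expansive on Λ. -/

import Mathlib

open Set Metric Filter
open scoped Classical Topology

variable {X : Type*}

/-- A (continuous) flow on a topological space, given as a map `φ : ℝ → X → X`. -/
def IsFlowMap [TopologicalSpace X] (φ : ℝ → X → X) : Prop :=
  Continuous (fun p : ℝ × X => φ p.1 p.2) ∧ (∀ x : X, φ 0 x = x) ∧
    ∀ t s : ℝ, ∀ x : X, φ (t + s) x = φ t (φ s x)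

/-- The singular set of a flow. -/
def SingSet (φ : ℝ → X → X) : Set X := {x : X | ∀ t : ℝ, φ t x = x}

/-- An increasing homeomorphism of `ℝ`: a strictly increasing continuous bijection. -/
def IncreasingHomeo (s : ℝ → ℝ) : Prop :=
  Continuous s ∧ StrictMono s ∧ Function.Bijective s

/-- Distance from a point to a set, with the convention that the distance
to the empty set is the diameter of the whole space. -/
noncomputable def distToSet [MetricSpace X] (z : X) (A : Set X) : ℝ :=
  if A = ∅ then Metric.diam (Set.univ : Set X) else Metric.infDist z A

/-- The orbit of a point under a flow. -/
def flowOrbit (φ : ℝ → X → X) (x : X) : Set X := Set.range fun t : ℝ => φ t x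

/-- Bowen–Walters expansivity of a flow on a subset `Λ`. -/
def ExpansiveOn [MetricSpace X] (φ : ℝ → X → X) (Λ : Set X) : Prop :=
  ∀ ε > (0:ℝ), ∃ δ > (0:ℝ), ∀ x ∈ Λ, ∀ y ∈ Λ, ∀ s : ℝ → ℝ, Continuous s → s 0 = 0 →
    (∀ t : ℝ, dist (φ t x) (φ (s t) y) ≤ δ) →
    ∃ τ ∈ Set.Icc (-ε) ε, y = φ τ x

/-- Komuro k*-expansivity of a flow on a subset `Λ`. -/
def KStarExpansiveOn [MetricSpace X] (φ : ℝ → X → X) (Λ : Set X) : Prop :=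
  ∀ ε > (0:ℝ), ∃ δ > (0:ℝ), ∀ x ∈ Λ, ∀ y ∈ Λ, ∀ s : ℝ → ℝ,
    IncreasingHomeo s → s 0 = 0 →
    (∀ t : ℝ, dist (φ t x) (φ (s t) y) ≤ δ) →
    ∃ t₀ : ℝ, ∃ τ ∈ Set.Icc (t₀ - ε) (t₀ + ε), φ (s t₀) y = φ τ x

/-- Singular expansivity of a flow on a subset `Λ`. -/
def SingularExpansiveOn [MetricSpace X] (φ : ℝ → X → X) (Λ : Set X) : Prop :=
  ∀ ε > (0:ℝ), ∃ δ > (0:ℝ), ∀ x ∈ Λ, ∀ y ∈ Λ, ∀ s : ℝ → ℝ, IncreasingHomeo s →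
    (∀ t : ℝ, dist (φ t x) (φ (s t) y) ≤ δ * distToSet (φ t x) (SingSet φ)) →
    ∃ t₀ : ℝ, ∃ τ ∈ Set.Icc (t₀ - ε) (t₀ + ε), φ (s t₀) y = φ τ x

/-- A periodic point of a flow: a nonsingular point with a positive period. -/
def IsPeriodicPoint (φ : ℝ → X → X) (x : X) : Prop :=
  x ∉ SingSet φ ∧ ∃ t : ℝ, 0 < t ∧ φ t x = x

/-- An invariant set `K` is dynamically isolated if it has a neighborhood `U`
with `K = ⋂_{t ∈ ℝ} φ_t(U)`. -/
def DynIsolated [TopologicalSpace X] (φ : ℝ → X → X) (K : Set X) : Prop :=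
  ∃ U : Set X, K ⊆ interior U ∧ K = ⋂ t : ℝ, φ t '' U

/-- Equicontinuity of a flow. -/
def EquicontinuousFlow [MetricSpace X] (φ : ℝ → X → X) : Prop :=
  ∀ ε > (0:ℝ), ∃ δ > (0:ℝ), ∀ x y : X, dist x y ≤ δ →
    ∀ t : ℝ, dist (φ t x) (φ t y) ≤ ε

/-- Singular equicontinuity of a flow. -/
def SingularEquicontinuous [MetricSpace X] (φ : ℝ → X → X) : Prop :=
  ∀ ε > (0:ℝ), ∃ δ > (0:ℝ), ∀ x y : X, dist x y ≤ δ * distToSet x (SingSet φ) →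
    ∀ t : ℝ, dist (φ t x) (φ t y) ≤ ε


section Aux

variable [MetricSpace X] {φ : ℝ → X → X}

lemma flow_addl (hφ : IsFlowMap φ) (a b : ℝ) (z : X) : φ a (φ b z) = φ (a + b) z :=
  (hφ.2.2 a b z).symm

lemma flow_cancel (hφ : IsFlowMap φ) (a : ℝ) (z : X) : φ (-a) (φ a z) = z := by
  rw [flow_addl hφ, neg_add_cancel, hφ.2.1]

lemma flow_per_neg (hφ : IsFlowMap φ) {p : ℝ} {z : X} (hp : φ p z = z) : φ (-p) z = z := by
  conv_lhs => rw [← hp]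
  exact flow_cancel hφ p z

lemma flow_per_int (hφ : IsFlowMap φ) {p : ℝ} {z : X} (hp : φ p z = z) (m : ℤ) :
    φ ((m : ℝ) * p) z = z := by
  induction m using Int.induction_on with
  | zero => simpa using hφ.2.1 z
  | succ i ih =>
      have harg : ((i + 1 : ℤ) : ℝ) * p = p + ((i : ℤ) : ℝ) * p := by push_cast; ring
      rw [harg, hφ.2.2, ih, hp]
  | pred i ih =>
      have harg : ((-i - 1 : ℤ) : ℝ) * p = -p + ((-i : ℤ) : ℝ) * p := by push_cast; ring
      rw [harg, hφ.2.2, ih, flow_per_neg hφ hp]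

lemma band_dodge {g : ℝ → ℝ} {T e a b : ℝ} (hT : 0 < T) (hTe : T < e)
    (hg : ContinuousOn g (uIcc a b))
    (havoid : ∀ t ∈ uIcc a b, ¬(T ≤ |g t| ∧ |g t| ≤ e)) (ha : |g a| < T) : |g b| < T := by
  by_contra hb
  push_neg at hb
  have hbe : e < |g b| := by
    by_contra hbe
    push_neg at hbe
    exact havoid b right_mem_uIcc ⟨hb, hbe⟩
  have habs : ContinuousOn (fun t => |g t|) (uIcc a b) := hg.abs
  have hmem : (T + e) / 2 ∈ uIcc (|g a|) (|g b|) := by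
    rw [uIcc_of_le (by linarith)]
    constructor <;> [linarith; linarith]
  obtain ⟨t, ht, hgt⟩ := intermediate_value_uIcc habs hmem
  simp only at hgt
  exact havoid t ht ⟨by rw [hgt]; linarith, by rw [hgt]; linarith⟩

lemma flow_uc [CompactSpace X] (hc : Continuous fun p : ℝ × X => φ p.1 p.2)
    {e γ : ℝ} (he : 0 < e) (hγ : 0 < γ) :
    ∃ d > 0, ∀ (ρ : ℝ) (a b : X), |ρ| ≤ e → dist a b ≤ d →
      dist (φ ρ a) (φ ρ b) ≤ γ := by
  have hK : IsCompact (Icc (-e) e ×ˢ (univ : Set X)) := isCompact_Icc.prod isCompact_univ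
  have huc := hK.uniformContinuousOn_of_continuous hc.continuousOn
  rw [Metric.uniformContinuousOn_iff_le] at huc
  obtain ⟨d, hd, hduc⟩ := huc γ hγ
  refine ⟨d, hd, fun ρ a b hρ hab => ?_⟩
  have h1 : ((ρ, a) : ℝ × X) ∈ Icc (-e) e ×ˢ (univ : Set X) :=
    ⟨⟨(abs_le.mp hρ).1, (abs_le.mp hρ).2⟩, trivial⟩
  have h2 : ((ρ, b) : ℝ × X) ∈ Icc (-e) e ×ˢ (univ : Set X) :=
    ⟨⟨(abs_le.mp hρ).1, (abs_le.mp hρ).2⟩, trivial⟩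
  have hdist : dist ((ρ, a) : ℝ × X) ((ρ, b) : ℝ × X) ≤ d := by
    rw [Prod.dist_eq]
    simp only [dist_self]
    exact max_le (le_of_lt hd) hab |>.trans (le_refl d) |>.trans (le_refl d) |> fun _ => max_le hd.le hab
  exact hduc _ h1 _ h2 hdist

lemma flow_uc0 [CompactSpace X] (hφ : IsFlowMap φ) {γ : ℝ} (hγ : 0 < γ) :
    ∃ d > 0, ∀ (z : X) (ρ : ℝ), |ρ| ≤ d → dist (φ ρ z) z ≤ γ := by
  have hK : IsCompact (Icc (-(1:ℝ)) 1 ×ˢ (univ : Set X)) := isCompact_Icc.prod isCompact_univ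
  have huc := hK.uniformContinuousOn_of_continuous hφ.1.continuousOn
  rw [Metric.uniformContinuousOn_iff_le] at huc
  obtain ⟨d, hd, hduc⟩ := huc γ hγ
  refine ⟨min d 1, by positivity, fun z ρ hρ => ?_⟩
  have hρ1 : |ρ| ≤ 1 := hρ.trans (min_le_right d 1)
  have h1 : ((ρ, z) : ℝ × X) ∈ Icc (-(1:ℝ)) 1 ×ˢ (univ : Set X) :=
    ⟨⟨(abs_le.mp hρ1).1, (abs_le.mp hρ1).2⟩, trivial⟩
  have h2 : (((0:ℝ), z) : ℝ × X) ∈ Icc (-(1:ℝ)) 1 ×ˢ (univ : Set X) :=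
    ⟨⟨by norm_num, by norm_num⟩, trivial⟩
  have hdist : dist ((ρ, z) : ℝ × X) (((0:ℝ), z) : ℝ × X) ≤ d := by
    rw [Prod.dist_eq]
    simp only [dist_self, Real.dist_eq, sub_zero]
    exact max_le (hρ.trans (min_le_left d 1)) hd.le
  have := hduc _ h1 _ h2 hdist
  simpa [hφ.2.1 z] using this

lemma exists_no_small_period [CompactSpace X] (hφ : IsFlowMap φ) {Λ : Set X}
    (hcomp : IsCompact Λ) (hns : Λ ∩ SingSet φ = ∅) :
    ∃ e > 0, ∀ z ∈ Λ, ∀ t : ℝ, 0 < |t| → |t| ≤ e → φ t z ≠ z := by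
  by_contra hcon
  push_neg at hcon
  have hseq : ∀ n : ℕ, ∃ z ∈ Λ, ∃ t : ℝ, 0 < t ∧ t ≤ 1 / (n + 1) ∧ φ t z = z := by
    intro n
    obtain ⟨z, hz, t, ht0, hte, htz⟩ := hcon (1 / (n + 1)) (by positivity)
    rcases lt_or_gt_of_ne (abs_pos.mp ht0).symm.symm with h | h
    · exact ⟨z, hz, -t, by simpa [abs_of_neg h] using ht0, by
        simpa [abs_of_neg h] using hte, flow_per_neg hφ htz⟩
    · exact ⟨z, hz, t, h, by simpa [abs_of_pos h] using hte, htz⟩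
  choose z hzΛ t ht0 hte htz using hseq
  obtain ⟨a, haΛ, ψ, hψ, hψt⟩ := hcomp.tendsto_subseq hzΛ
  have haS : a ∈ SingSet φ := by
    intro τ
    set k : ℕ → ℤ := fun n => ⌊τ / t (ψ n)⌋ with hk
    have hkt : ∀ n, φ ((k n : ℝ) * t (ψ n)) (z (ψ n)) = z (ψ n) := fun n =>
      flow_per_int hφ (htz (ψ n)) (k n)
    have hbnd : ∀ n, |(k n : ℝ) * t (ψ n) - τ| ≤ 1 / (n + 1) := by
      intro n
      have htp := ht0 (ψ n)
      have h1 : (k n : ℝ) ≤ τ / t (ψ n) := Int.floor_le _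
      have h2 : τ / t (ψ n) - 1 < (k n : ℝ) := Int.sub_one_lt_floor _
      have h3 : (k n : ℝ) * t (ψ n) ≤ τ := by
        rw [← le_div_iff₀ htp]; exact h1
      have h4 : τ - t (ψ n) < (k n : ℝ) * t (ψ n) := by
        have := (mul_lt_mul_of_pos_right h2 htp)
        calc τ - t (ψ n) = (τ / t (ψ n) - 1) * t (ψ n) := by field_simp
        _ < (k n : ℝ) * t (ψ n) := this
      have h5 : t (ψ n) ≤ 1 / (n + 1) := by
        refine (hte (ψ n)).trans (one_div_le_one_div_of_le (by positivity) ?_)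
        have h6 : n ≤ ψ n := hψ.le_apply
        exact_mod_cast Nat.add_le_add_right h6 1
      rw [abs_le]
      constructor <;> nlinarith [htp]
    have hktend : Tendsto (fun n => (k n : ℝ) * t (ψ n)) atTop (𝓝 τ) := by
      have h0 : Tendsto (fun n : ℕ => (k n : ℝ) * t (ψ n) - τ) atTop (𝓝 0) := by
        exact squeeze_zero_norm (fun n => by rw [Real.norm_eq_abs]; exact hbnd n)
          tendsto_one_div_add_atTop_nhds_zero_nat
      have := h0.add (tendsto_const_nhds (x := τ))
      simpa using this
    have hpair : Tendsto (fun n => (((k n : ℝ) * t (ψ n)), z (ψ n))) atTop (𝓝 (τ, a)) :=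
      hktend.prodMk_nhds hψt
    have hcomp2 : Tendsto (fun n => φ ((k n : ℝ) * t (ψ n)) (z (ψ n))) atTop (𝓝 (φ τ a)) :=
      (hφ.1.tendsto (τ, a)).comp hpair
    have : Tendsto (fun n => φ ((k n : ℝ) * t (ψ n)) (z (ψ n))) atTop (𝓝 a) := by
      simpa only [hkt, Function.comp_def] using hψt
    exact tendsto_nhds_unique hcomp2 this
  have : a ∈ Λ ∩ SingSet φ := ⟨haΛ, haS⟩
  rw [hns] at this
  exact this

end Aux

set_option maxHeartbeats 1000000 in
theorem singular_expansive_expansive_on_nonsingular_compact_invariant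
    [MetricSpace X] [CompactSpace X] (φ : ℝ → X → X) (hφ : IsFlowMap φ)
    (h : SingularExpansiveOn φ Set.univ) (Λ : Set X) (hcomp : IsCompact Λ)
    (hinv : ∀ t : ℝ, φ t '' Λ = Λ) (hns : Λ ∩ SingSet φ = ∅) :
    ExpansiveOn φ Λ := by
  rcases Λ.eq_empty_or_nonempty with hΛe | ⟨x₀, hx₀⟩
  · intro ε hε
    refine ⟨1, one_pos, fun x hx => ?_⟩
    rw [hΛe] at hx
    exact absurd hx (notMem_empty x)
  have hmem : ∀ (t : ℝ), ∀ z ∈ Λ, φ t z ∈ Λ := by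
    intro t z hz
    rw [← hinv t]
    exact ⟨z, hz, rfl⟩
  obtain ⟨e, he, hnp⟩ := exists_no_small_period hφ hcomp hns
  have hSc : IsClosed (SingSet φ) := by
    have hrw : SingSet φ = ⋂ t : ℝ, {x : X | φ t x = x} := by
      ext z; simp [SingSet, Set.mem_iInter]
    rw [hrw]
    refine isClosed_iInter fun t => isClosed_eq ?_ continuous_id
    exact hφ.1.comp (Continuous.prodMk_right t)
  obtain ⟨c, hc0, hcΛ⟩ : ∃ c > 0, ∀ z ∈ Λ, c ≤ distToSet z (SingSet φ) := by
    by_cases hS : SingSet φ = ∅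
    · refine ⟨Metric.diam (Set.univ : Set X), ?_, fun z hz => by rw [distToSet, if_pos hS]⟩
      have hx₀n : x₀ ∉ SingSet φ := by rw [hS]; exact notMem_empty _
      obtain ⟨t, ht⟩ : ∃ t, φ t x₀ ≠ x₀ := by simpa [SingSet] using hx₀n
      have hd : 0 < dist (φ t x₀) x₀ := dist_pos.mpr ht
      exact lt_of_lt_of_le hd (dist_le_diam_of_mem (isCompact_univ.isBounded) trivial trivial)
    · obtain ⟨z₀, hz₀Λ, hz₀min⟩ := hcomp.exists_isMinOn ⟨x₀, hx₀⟩
        ((continuous_infDist_pt (SingSet φ)).continuousOn)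
      refine ⟨infDist z₀ (SingSet φ), ?_, fun z hz => by
        rw [distToSet, if_neg hS]; exact hz₀min hz⟩
      refine (hSc.notMem_iff_infDist_pos (nonempty_iff_ne_empty.mpr hS)).mp ?_
      intro hz₀S
      have hh : z₀ ∈ Λ ∩ SingSet φ := ⟨hz₀Λ, hz₀S⟩
      rw [hns] at hh
      exact hh
  intro ε hε
  set εse : ℝ := e / 8 with hεse
  obtain ⟨δse, hδse, hSE⟩ := h εse (by positivity)
  set γ : ℝ := δse * c / 2 with hγdef
  have hγ : 0 < γ := by positivity
  obtain ⟨dV, hdV, hV⟩ := flow_uc0 hφ hγ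
  set T : ℝ := min (min ε (e/8)) (dV/2) with hTdef
  have hT : 0 < T := lt_min (lt_min hε (by positivity)) (by positivity)
  have hTε : T ≤ ε := (min_le_left _ _).trans (min_le_left _ _)
  have hTe8 : T ≤ e/8 := (min_le_left _ _).trans (min_le_right _ _)
  have hTdV : 2*T ≤ dV := by
    have := min_le_right (min ε (e/8)) (dV/2); linarith
  have hTe : T < e := by linarith
  -- separation constant r
  have hBcomp : IsCompact (((Icc (-e) (-T) ∪ Icc T e) ×ˢ Λ : Set (ℝ × X))) :=
    (isCompact_Icc.union isCompact_Icc).prod hcomp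
  have hBne : (((Icc (-e) (-T) ∪ Icc T e) ×ˢ Λ : Set (ℝ × X))).Nonempty :=
    ⟨(T, x₀), ⟨Or.inr ⟨le_refl T, by linarith⟩, hx₀⟩⟩
  have hgc : Continuous fun pp : ℝ × X => dist (φ pp.1 pp.2) pp.2 := hφ.1.dist continuous_snd
  obtain ⟨⟨ρ₀, w₀⟩, hρw₀, hmin⟩ := hBcomp.exists_isMinOn hBne hgc.continuousOn
  set r : ℝ := dist (φ ρ₀ w₀) w₀ with hrdef
  have hρ₀abs : T ≤ |ρ₀| ∧ |ρ₀| ≤ e := by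
    rcases hρw₀.1 with h1 | h1
    · rw [abs_of_neg (by linarith [h1.2] : ρ₀ < 0)]
      exact ⟨by linarith [h1.2], by linarith [h1.1]⟩
    · rw [abs_of_pos (by linarith [h1.1] : 0 < ρ₀)]
      exact ⟨h1.1, h1.2⟩
  have hr : 0 < r := dist_pos.mpr (hnp w₀ hρw₀.2 ρ₀ (by linarith [hρ₀abs.1]) hρ₀abs.2)
  have hsep : ∀ z ∈ Λ, ∀ ρ : ℝ, T ≤ |ρ| → |ρ| ≤ e → r ≤ dist (φ ρ z) z := by
    intro z hz ρ h1 h2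
    have hρB : ((ρ, z) : ℝ × X) ∈ (Icc (-e) (-T) ∪ Icc T e) ×ˢ Λ := by
      refine ⟨?_, hz⟩
      rcases le_or_gt 0 ρ with hsgn | hsgn
      · rw [abs_of_nonneg hsgn] at h1 h2
        exact Or.inr ⟨h1, h2⟩
      · rw [abs_of_neg hsgn] at h1 h2
        exact Or.inl ⟨by linarith, by linarith⟩
    exact hmin hρB
  obtain ⟨dω, hdω, hω⟩ := flow_uc hφ.1 he (show (0:ℝ) < r/4 by positivity)
  set δ : ℝ := min (min dω γ) (r/4) with hδdef
  have hδpos : 0 < δ := lt_min (lt_min hdω hγ) (by positivity)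
  have hδdω : δ ≤ dω := (min_le_left _ _).trans (min_le_left _ _)
  have hδγ : δ ≤ γ := (min_le_left _ _).trans (min_le_right _ _)
  have hδr : δ ≤ r/4 := min_le_right _ _
  refine ⟨δ, hδpos, ?_⟩
  intro x hx y hy s hscont hs0 hbd
  -- Key lemma: slow variation of s
  have hL1 : ∀ t ρ : ℝ, |ρ| ≤ e → |s (t + ρ) - s t - ρ| < T := by
    intro t ρ hρ
    have havoid : ∀ ρ' ∈ uIcc (0:ℝ) ρ,
        ¬(T ≤ |s (t + ρ') - s t - ρ'| ∧ |s (t + ρ') - s t - ρ'| ≤ e) := by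
      rintro ρ' hρ' ⟨hb1, hb2⟩
      have hρ'e : |ρ'| ≤ e := by
        rcases le_total 0 ρ with hh | hh
        · rw [uIcc_of_le hh] at hρ'
          rw [abs_of_nonneg hρ'.1]
          exact hρ'.2.trans ((le_abs_self ρ).trans hρ)
        · rw [uIcc_of_ge hh] at hρ'
          rw [abs_of_nonpos hρ'.2]
          have : -ρ ≤ e := (neg_le_abs ρ).trans hρ
          linarith [hρ'.1]
      have hzΛ : φ (s t + ρ') y ∈ Λ := hmem _ y hy
      have he1 : φ (s (t + ρ')) y = φ (s (t + ρ') - s t - ρ') (φ (s t + ρ') y) := by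
        rw [flow_addl hφ]; congr 1; ring
      have he2 : φ (t + ρ') x = φ ρ' (φ t x) := by rw [flow_addl hφ]; congr 1; ring
      have he3 : φ (s t + ρ') y = φ ρ' (φ (s t) y) := by rw [flow_addl hφ]; congr 1; ring
      have hd2 : dist (φ (t+ρ') x) (φ (s t + ρ') y) ≤ r/4 := by
        rw [he2, he3]
        exact hω ρ' _ _ hρ'e ((hbd t).trans hδdω)
      have hd3 : dist (φ (s (t+ρ')) y) (φ (s t + ρ') y) ≤ δ + r/4 := by
        calc dist (φ (s (t+ρ')) y) (φ (s t + ρ') y)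
            ≤ dist (φ (s (t+ρ')) y) (φ (t+ρ') x) + dist (φ (t+ρ') x) (φ (s t + ρ') y) :=
              dist_triangle _ _ _
          _ ≤ δ + r/4 := add_le_add (by rw [dist_comm]; exact hbd (t+ρ')) hd2
      have hd4 : r ≤ dist (φ (s (t+ρ')) y) (φ (s t + ρ') y) := by
        rw [he1]
        exact hsep _ hzΛ _ hb1 hb2
      linarith
    have hg0 : |s (t + 0) - s t - 0| < T := by
      simpa using hT
    exact band_dodge (g := fun ρ' => s (t + ρ') - s t - ρ') (a := 0) (b := ρ) hT hTe
      (Continuous.continuousOn (by fun_prop)) havoid hg0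
  have hT2e : 2*T ≤ e := by linarith
  -- smoothed reparametrization q
  set S : ℝ → ℝ := fun b => ∫ w in (0:ℝ)..b, s w with hSdef
  have hS : ∀ b : ℝ, HasDerivAt S (s b) b := fun b =>
    intervalIntegral.integral_hasDerivAt_right (hscont.intervalIntegrable _ _)
      (hscont.stronglyMeasurableAtFilter _ _) hscont.continuousAt
  set q : ℝ → ℝ := fun u => (S (u + 2*T) - S u) / (2*T) with hqdef
  have hq' : ∀ u : ℝ, HasDerivAt q ((s (u + 2*T) - s u) / (2*T)) u := by
    intro u
    have h1 : HasDerivAt (fun u : ℝ => S (u + 2*T)) (s (u + 2*T)) u := by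
      have := (hS (u + 2*T)).comp u ((hasDerivAt_id u).add_const (2*T))
      simpa [Function.comp_def] using this
    exact (h1.sub (hS u)).div_const (2*T)
  have hgrow : ∀ u : ℝ, T < s (u + 2*T) - s u := by
    intro u
    have h1 := hL1 u (2*T) (by rw [abs_of_pos (by linarith)]; linarith)
    have h2 := abs_lt.mp h1
    linarith [h2.1]
  have hqmono : StrictMono q := by
    apply strictMono_of_deriv_pos
    intro u
    rw [(hq' u).deriv]
    have := hgrow u
    exact div_pos (by linarith) (by linarith)
  have hqcont : Continuous q :=
    continuous_iff_continuousAt.mpr fun u => (hq' u).differentiableAt.continuousAt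
  have hqint : ∀ u : ℝ, S (u + 2*T) - S u = ∫ w in u..(u+2*T), s w := by
    intro u
    have hadj := intervalIntegral.integral_add_adjacent_intervals
      (hscont.intervalIntegrable (μ := MeasureTheory.volume) 0 u) (hscont.intervalIntegrable u (u+2*T))
    simp only [hSdef]
    linarith [hadj]
  have hwin : ∀ u : ℝ, ∀ w ∈ Icc u (u + 2*T), s u - T ≤ s w ∧ s w ≤ s u + 3*T := by
    intro u w hw
    have h1 : |s w - s u - (w - u)| < T := by
      have := hL1 u (w - u) (by
        rw [abs_of_nonneg (by linarith [hw.1])]; linarith [hw.2])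
      rwa [show u + (w - u) = w by ring] at this
    have h2 := abs_lt.mp h1
    exact ⟨by linarith [hw.1], by linarith [hw.2]⟩
  have hqbnd : ∀ u : ℝ, s u - T ≤ q u ∧ q u ≤ s u + 3*T := by
    intro u
    have hle : u ≤ u + 2*T := by linarith
    have hint1 : (∫ _w in u..(u+2*T), (s u - T)) ≤ ∫ w in u..(u+2*T), s w :=
      intervalIntegral.integral_mono_on hle (intervalIntegrable_const)
        (hscont.intervalIntegrable _ _) (fun w hw => (hwin u w hw).1)
    have hint2 : (∫ w in u..(u+2*T), s w) ≤ ∫ _w in u..(u+2*T), (s u + 3*T) :=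
      intervalIntegral.integral_mono_on hle (hscont.intervalIntegrable _ _)
        (intervalIntegrable_const) (fun w hw => (hwin u w hw).2)
    rw [intervalIntegral.integral_const] at hint1 hint2
    have hq1 : q u = (∫ w in u..(u+2*T), s w) / (2*T) := by
      rw [hqdef]; simp only; rw [hqint u]
    simp only [smul_eq_mul, show u + 2*T - u = 2*T by ring] at hint1 hint2
    constructor
    · rw [hq1, le_div_iff₀ (by linarith : (0:ℝ) < 2*T)]
      linarith [hint1]
    · rw [hq1, div_le_iff₀ (by linarith : (0:ℝ) < 2*T)]
      linarith [hint2]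
  have hqex : ∀ u : ℝ, ∃ w ∈ Icc u (u+2*T), s w = q u := by
    intro u
    have hle : u ≤ u + 2*T := by linarith
    have hne : (Icc u (u+2*T)).Nonempty := ⟨u, le_refl u, by linarith⟩
    obtain ⟨w₁, hw₁, hmin₁⟩ := isCompact_Icc.exists_isMinOn hne hscont.continuousOn
    obtain ⟨w₂, hw₂, hmax₂⟩ := isCompact_Icc.exists_isMaxOn hne hscont.continuousOn
    have hq1 : s w₁ ≤ q u := by
      have hint1 : (∫ _w in u..(u+2*T), s w₁) ≤ ∫ w in u..(u+2*T), s w :=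
        intervalIntegral.integral_mono_on hle (intervalIntegrable_const)
          (hscont.intervalIntegrable _ _) (fun w hw => hmin₁ hw)
      rw [intervalIntegral.integral_const] at hint1
      simp only [smul_eq_mul, show u + 2*T - u = 2*T by ring] at hint1
      have hq1' : q u = (∫ w in u..(u+2*T), s w) / (2*T) := by
        rw [hqdef]; simp only; rw [hqint u]
      rw [hq1', le_div_iff₀ (by linarith : (0:ℝ) < 2*T)]
      linarith [hint1]
    have hq2 : q u ≤ s w₂ := by
      have hint2 : (∫ w in u..(u+2*T), s w) ≤ ∫ _w in u..(u+2*T), s w₂ :=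
        intervalIntegral.integral_mono_on hle (hscont.intervalIntegrable _ _)
          (intervalIntegrable_const) (fun w hw => hmax₂ hw)
      rw [intervalIntegral.integral_const] at hint2
      simp only [smul_eq_mul, show u + 2*T - u = 2*T by ring] at hint2
      have hq1' : q u = (∫ w in u..(u+2*T), s w) / (2*T) := by
        rw [hqdef]; simp only; rw [hqint u]
      rw [hq1', div_le_iff₀ (by linarith : (0:ℝ) < 2*T)]
      linarith [hint2]
    have hsub : uIcc w₁ w₂ ⊆ Icc u (u+2*T) := by
      rw [uIcc]
      exact Icc_subset_Icc (le_min hw₁.1 hw₂.1) (max_le hw₁.2 hw₂.2)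
    obtain ⟨w, hwmem, hws⟩ := intermediate_value_uIcc (hscont.continuousOn.mono hsub)
      (show q u ∈ uIcc (s w₁) (s w₂) by
        rw [uIcc_of_le (hq1.trans hq2)]; exact ⟨hq1, hq2⟩)
    exact ⟨w, hsub hwmem, hws⟩
  have hstairup : ∀ u : ℝ, ∀ n : ℕ, s u + n * (e - T) ≤ s (u + n * e) := by
    intro u n
    induction n with
    | zero => simp
    | succ n ih =>
        have h1 := hL1 (u + n*e) e (by rw [abs_of_pos he])
        have h2 := abs_lt.mp h1
        have harg : u + (n : ℝ)*e + e = u + ((n : ℕ) + 1 : ℝ)*e := by push_cast; ring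
        rw [harg] at h2
        push_cast
        push_cast at ih
        linarith [h2.1]
  have hstairdn : ∀ u : ℝ, ∀ n : ℕ, s (u - n * e) ≤ s u - n * (e - T) := by
    intro u n
    induction n with
    | zero => simp
    | succ n ih =>
        have h1 := hL1 (u - ((n:ℝ)+1)*e) e (by rw [abs_of_pos he])
        have h2 := abs_lt.mp h1
        have harg : u - ((n : ℝ)+1)*e + e = u - (n : ℝ)*e := by ring
        rw [harg] at h2
        push_cast
        push_cast at ih
        linarith [h2.2]
  have hqsurj : Function.Surjective q := by
    intro v
    have heT : 0 < e - T := by linarith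
    obtain ⟨n, hn⟩ := exists_nat_ge ((v - s 0 + T) / (e - T))
    obtain ⟨m, hm⟩ := exists_nat_ge ((s 0 + 3*T - v) / (e - T))
    have hup : v ≤ q ((n : ℝ) * e) := by
      have h1 := hstairup 0 n
      have h2 := (hqbnd ((n:ℝ)*e)).1
      have h3 : v - s 0 + T ≤ n * (e - T) := by
        rw [div_le_iff₀ heT] at hn; linarith
      rw [zero_add] at h1
      linarith
    have hdn : q (-((m : ℝ) * e)) ≤ v := by
      have h1 := hstairdn 0 m
      have h2 := (hqbnd (-((m:ℝ)*e))).2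
      have h3 : s 0 + 3*T - v ≤ m * (e - T) := by
        rw [div_le_iff₀ heT] at hm; linarith
      rw [zero_sub] at h1
      linarith
    obtain ⟨u, _humem, hqu⟩ := intermediate_value_uIcc hqcont.continuousOn
      (show v ∈ uIcc (q (-((m:ℝ)*e))) (q ((n:ℝ)*e)) by
        rw [uIcc_of_le (by linarith)]; exact ⟨hdn, hup⟩)
    exact ⟨u, hqu⟩
  have hqhomeo : IncreasingHomeo q := ⟨hqcont, hqmono, hqmono.injective, hqsurj⟩
  have hqbd : ∀ u : ℝ, dist (φ u x) (φ (q u) y) ≤ δse * c := by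
    intro u
    obtain ⟨w, hw, hws⟩ := hqex u
    have h1 : dist (φ u x) (φ w x) ≤ γ := by
      have he1 : φ w x = φ (w - u) (φ u x) := by rw [flow_addl hφ]; congr 1; ring
      rw [he1, dist_comm]
      exact hV _ _ (by
        rw [abs_of_nonneg (by linarith [hw.1])]
        linarith [hw.2])
    have h2 : dist (φ w x) (φ (q u) y) ≤ δ := by rw [← hws]; exact hbd w
    have h3 : dist (φ u x) (φ (q u) y) ≤ γ + δ :=
      le_trans (dist_triangle _ (φ w x) _) (add_le_add h1 h2)
    have h4 : γ + δ ≤ δse * c := by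
      rw [hγdef] at hδγ ⊢
      linarith
    linarith
  have hSEbd : ∀ u : ℝ, dist (φ u x) (φ (q u) y) ≤ δse * distToSet (φ u x) (SingSet φ) :=
    fun u => (hqbd u).trans (mul_le_mul_of_nonneg_left (hcΛ _ (hmem u x hx)) hδse.le)
  obtain ⟨t₀, τ₀, _hτ₀, heq₀⟩ := hSE x trivial y trivial q hqhomeo hSEbd
  set σ : ℝ := τ₀ - q t₀ with hσdef
  have hyσ : y = φ σ x := by
    have h1 : φ (-(q t₀)) (φ (q t₀) y) = y := flow_cancel hφ _ _
    rw [heq₀, flow_addl hφ] at h1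
    rw [← h1]
    congr 1
    rw [hσdef]; ring
  -- second application of singular expansivity, to (x, x)
  set Q : ℝ → ℝ := fun u => q u + σ with hQdef
  have hQhomeo : IncreasingHomeo Q := by
    refine ⟨hqcont.add continuous_const, fun a b hab => by
      simp only [hQdef, add_lt_add_iff_right]; exact hqmono hab, ?_, ?_⟩
    · intro a b hab
      simp only [hQdef, add_left_inj] at hab
      exact hqmono.injective hab
    · intro v
      obtain ⟨u, hu⟩ := hqsurj (v - σ)
      refine ⟨u, ?_⟩
      simp only [hQdef]
      rw [hu]; ring
  have hQeq : ∀ u : ℝ, φ (Q u) x = φ (q u) y := by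
    intro u
    rw [hyσ, flow_addl hφ]
  have hQbd : ∀ u : ℝ, dist (φ u x) (φ (Q u) x) ≤ δse * distToSet (φ u x) (SingSet φ) := by
    intro u
    rw [hQeq u]
    exact hSEbd u
  obtain ⟨t₁, τ₁, hτ₁, heq₁⟩ := hSE x trivial x trivial Q hQhomeo hQbd
  set p : ℝ := Q t₁ - τ₁ with hpdef
  have hpx : φ p x = x := by
    have h1 : φ (-τ₁) (φ (Q t₁) x) = φ (-τ₁) (φ τ₁ x) := by rw [heq₁]
    rw [flow_cancel hφ, flow_addl hφ] at h1
    rw [← h1]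
    congr 1
    rw [hpdef]; ring
  have hyσp : y = φ (σ - p) x := by
    rw [hyσ]
    have h1 : φ (σ - p) x = φ σ (φ (-p) x) := by
      rw [flow_addl hφ, show σ + -p = σ - p by ring]
    rw [h1, flow_per_neg hφ hpx]
  have hpnear : |p - (s t₁ + σ - t₁)| ≤ 3*T + εse := by
    have h1 := hqbnd t₁
    have h2 : t₁ - εse ≤ τ₁ := hτ₁.1
    have h3 : τ₁ ≤ t₁ + εse := hτ₁.2
    have h4 : p = q t₁ + σ - τ₁ := by rw [hpdef, hQdef]
    rw [abs_le, h4]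
    constructor <;> linarith [h1.1, h1.2]
  have hf₂avoid : ∀ u : ℝ,
      ¬(T ≤ |s u + σ - p - u| ∧ |s u + σ - p - u| ≤ e) := by
    rintro u ⟨h1, h2⟩
    have hzΛ : φ u x ∈ Λ := hmem u x hx
    have he1 : φ (s u + σ - p - u) (φ u x) = φ (s u) y := by
      rw [flow_addl hφ, hyσp, flow_addl hφ]
      congr 1; ring
    have h3 : r ≤ dist (φ (s u + σ - p - u) (φ u x)) (φ u x) := hsep _ hzΛ _ h1 h2
    rw [he1] at h3
    have h4 : dist (φ (s u) y) (φ u x) ≤ δ := by rw [dist_comm]; exact hbd u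
    linarith
  have hf₂t₁ : |s t₁ + σ - p - t₁| < T := by
    have h1 : |s t₁ + σ - p - t₁| ≤ 3*T + εse := by
      have heq : s t₁ + σ - p - t₁ = -(p - (s t₁ + σ - t₁)) := by ring
      rw [heq, abs_neg]
      exact hpnear
    have h2 : 3*T + εse ≤ e/2 := by rw [hεse]; linarith
    by_contra hcon
    push_neg at hcon
    exact hf₂avoid t₁ ⟨hcon, by linarith⟩
  have hf₂0 : |s 0 + σ - p - 0| < T := by
    refine band_dodge (g := fun u => s u + σ - p - u) (a := t₁) (b := 0) hT hTe
      (Continuous.continuousOn (by fun_prop)) (fun u _ => hf₂avoid u) hf₂t₁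
  refine ⟨σ - p, ?_, hyσp⟩
  rw [hs0] at hf₂0
  have h5 : |σ - p| < T := by
    rwa [show (0:ℝ) + σ - p - 0 = σ - p by ring] at hf₂0
  have h6 := abs_lt.mp h5
  exact ⟨by linarith, by linarith⟩
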